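/- Let 0 < α ≤ 1 and let u ∈ M(B_α(𝔻)) extend continuously to the closed unit disk (for 0 < α < 1 this extension is automatic since M(B_α(𝔻)) = B_α(𝔻) ⊂ A(𝔻)). If the multiplication operator M_u : B_α(𝔻) → B_α(𝔻) is Fredholm, then there exist r ∈ (0,1) and δ > 0 such that |u(z)| ≥ δ for all z with r ≤ |z| < 1. -/

import Mathlib

open Metric Set

noncomputable section

/-- The Bloch-type norm `‖f‖_{B_α} = |f(0)| + sup_{z∈𝔻} (1-|z|²)^α |f'(z)|`. -/
def blochNorm (α : ℝ) (f : ℂ → ℂ) : ℝ :=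
  ‖f 0‖ +
    sSup ((fun z => (1 - ‖z‖ ^ 2) ^ α * ‖deriv f z‖) '' ball (0 : ℂ) 1)

/-- Finiteness of the Bloch-type seminorm: `sup_{z∈𝔻} (1-|z|²)^α |f'(z)| < ∞`. -/
def BlochBdd (α : ℝ) (f : ℂ → ℂ) : Prop :=
  BddAbove ((fun z => (1 - ‖z‖ ^ 2) ^ α * ‖deriv f z‖) '' ball (0 : ℂ) 1)

/-- A bounded operator is Fredholm if it has closed range and finite-dimensional
kernel and cokernel. -/
def IsFredholmOp {E : Type*} [NormedAddCommGroup E] [NormedSpace ℂ E] (T : E →L[ℂ] E) : Prop :=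
  IsClosed (LinearMap.range (T : E →ₗ[ℂ] E) : Set E) ∧ FiniteDimensional ℂ (LinearMap.ker (T : E →ₗ[ℂ] E)) ∧
    FiniteDimensional ℂ (E ⧸ LinearMap.range (T : E →ₗ[ℂ] E))

/-- The essential spectrum: those `λ ∈ ℂ` for which `T - λI` is not Fredholm. -/
def essSpectrum {E : Type*} [NormedAddCommGroup E] [NormedSpace ℂ E] (T : E →L[ℂ] E) : Set ℂ :=
  {l : ℂ | ¬ IsFredholmOp (T - l • ContinuousLinearMap.id ℂ E)}


lemma cabs_ofReal (r : ℝ) : ‖(r : ℂ)‖ = |r| := by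
  rw [Complex.norm_real, Real.norm_eq_abs]

lemma stepI {w u : ℂ → ℂ} (hw : ContinuousOn w (closedBall (0:ℂ) 1))
    (hwu : ∀ z ∈ ball (0:ℂ) 1, w z = u z)
    (hnz : ∀ ζ : ℂ, ‖ζ‖ = 1 → w ζ ≠ 0) :
    ∃ r ∈ Set.Ioo (0 : ℝ) 1, ∃ δ : ℝ, 0 < δ ∧
      ∀ z : ℂ, r ≤ ‖z‖ → ‖z‖ < 1 → δ ≤ ‖u z‖ := by
  have hsph : sphere (0:ℂ) 1 ⊆ closedBall (0:ℂ) 1 := sphere_subset_closedBall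
  obtain ⟨ζ₀, hζ₀, hmin⟩ := (isCompact_sphere (0:ℂ) 1).exists_isMinOn
    ⟨1, by simp⟩ ((hw.mono hsph).norm)
  set m : ℝ := ‖w ζ₀‖ with hm
  have hζ₀1 : ‖ζ₀‖ = 1 := by simpa [Complex.dist_eq] using hζ₀
  have hm0 : 0 < m := by
    have := hnz ζ₀ hζ₀1
    simpa [hm, norm_pos_iff] using this
  have huc := (isCompact_closedBall (0:ℂ) 1).uniformContinuousOn_of_continuous hw
  rw [Metric.uniformContinuousOn_iff] at huc
  obtain ⟨d, hd0, hd⟩ := huc (m/2) (by linarith)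
  refine ⟨max (1/2) (1 - d/2), ⟨by positivity, max_lt (by norm_num) (by linarith)⟩, m/2, by linarith, ?_⟩
  intro z hrz hz1
  have hz05 : (1:ℝ)/2 ≤ ‖z‖ := le_trans (le_max_left _ _) hrz
  have hz0 : ‖z‖ ≠ 0 := by positivity
  have hzpos : 0 < ‖z‖ := lt_of_le_of_ne (norm_nonneg z) (Ne.symm hz0)
  set ζ : ℂ := z / (‖z‖ : ℂ) with hζ
  have habsz : ‖((‖z‖ : ℝ) : ℂ)‖ = ‖z‖ := by
    simp [cabs_ofReal, abs_of_nonneg (norm_nonneg z)]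
  have hζ1 : ‖ζ‖ = 1 := by
    rw [hζ, norm_div, habsz, div_self hz0]
  have hzsub : z - ζ = (((‖z‖ : ℝ) : ℂ) - 1) * ζ := by
    rw [hζ]
    have : ((‖z‖ : ℝ) : ℂ) ≠ 0 := by
      simpa [Complex.ofReal_eq_zero] using hz0
    field_simp
  have hdist : dist z ζ = 1 - ‖z‖ := by
    rw [Complex.dist_eq, hzsub, norm_mul, hζ1, mul_one,
      show (((‖z‖ : ℝ) : ℂ) - 1) = (((‖z‖ - 1 : ℝ)) : ℂ) by push_cast; ring,
      cabs_ofReal, abs_of_nonpos (by linarith)]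
    ring
  have hdlt : dist z ζ < d := by
    have : max (1/2) (1 - d/2) ≤ ‖z‖ := hrz
    have h2 : 1 - d/2 ≤ ‖z‖ := le_trans (le_max_right _ _) hrz
    rw [hdist]; linarith
  have hzmem : z ∈ closedBall (0:ℂ) 1 := by
    simpa [Complex.dist_eq] using hz1.le
  have hζmem : ζ ∈ closedBall (0:ℂ) 1 := by
    simpa [Complex.dist_eq] using hζ1.le
  have hwd := hd z hzmem ζ hζmem hdlt
  have hwζ : m ≤ ‖w ζ‖ := hmin (by simpa [Complex.dist_eq] using hζ1)
  have huz : u z = w z := (hwu z (by simpa [Complex.dist_eq] using hz1)).symm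
  rw [dist_eq_norm] at hwd
  have h3 : ‖w ζ‖ - ‖w z‖ ≤ ‖w z - w ζ‖ := by
    have := norm_sub_norm_le (w z) (w ζ)
    have h4 := abs_norm_sub_norm_le (w z) (w ζ)
    rw [abs_sub_le_iff] at h4
    exact h4.2
  rw [huz]
  have : m / 2 ≤ ‖w z‖ := by linarith
  simpa using this

end


noncomputable section



lemma aux_D_pos {c z : ℂ} (hc : ‖c‖ ≤ 1) (hz : ‖z‖ < 1) :
    1 - ‖z‖ ≤ ‖1 - c * z‖ := by
  have h1 : ‖(1:ℂ)‖ - ‖c * z‖ ≤ ‖1 - c * z‖ := by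
    simpa using norm_sub_norm_le (1 : ℂ) (c * z)
  have h2 : ‖c * z‖ ≤ ‖z‖ := by
    rw [norm_mul]
    nlinarith [norm_nonneg z, norm_nonneg c]
  simp only [norm_one] at h1
  linarith

lemma aux_D_pos' {c z : ℂ} (hc : ‖c‖ ≤ 1) (hz : ‖z‖ ≤ 1) :
    1 - ‖c‖ ≤ ‖1 - c * z‖ := by
  have h1 : ‖(1:ℂ)‖ - ‖c * z‖ ≤ ‖1 - c * z‖ := by
    simpa using norm_sub_norm_le (1 : ℂ) (c * z)
  have h2 : ‖c * z‖ ≤ ‖c‖ := by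
    rw [norm_mul]
    nlinarith [norm_nonneg z, norm_nonneg c]
  simp only [norm_one] at h1
  linarith

lemma aux_ne {c z : ℂ} (hc : ‖c‖ ≤ 1) (hz : ‖z‖ < 1) :
    1 - c * z ≠ 0 := by
  intro h
  have := aux_D_pos hc hz
  rw [h, norm_zero] at this
  linarith

lemma aux_x_le {c z : ℂ} (hc : ‖c‖ ≤ 1) (hz : ‖z‖ < 1) :
    1 - ‖z‖ ^ 2 ≤ 2 * ‖1 - c * z‖ := by
  have h1 := aux_D_pos hc hz
  nlinarith [norm_nonneg z]

lemma aux_s_le {c z : ℂ} (hc : ‖c‖ ≤ 1) (hz : ‖z‖ < 1) :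
    1 - ‖c‖ ^ 2 ≤ 2 * ‖1 - c * z‖ := by
  have h1 := aux_D_pos' hc hz.le
  nlinarith [norm_nonneg c]

/-- the key product estimate `x^α * s^(2-α) ≤ 4 D^2` when `x,s ≤ 2D` -/
lemma aux_prod {α x s D : ℝ} (hα0 : 0 < α) (hα1 : α ≤ 1) (hx0 : 0 ≤ x) (hs0 : 0 ≤ s)
    (hD : 0 < D) (hx : x ≤ 2 * D) (hs : s ≤ 2 * D) :
    x ^ α * s ^ (2 - α) ≤ 4 * D ^ 2 := by
  have h2D : (0:ℝ) < 2 * D := by linarith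
  have h1 : x ^ α ≤ (2 * D) ^ α := Real.rpow_le_rpow hx0 hx hα0.le
  have h2 : s ^ (2 - α) ≤ (2 * D) ^ (2 - α) := Real.rpow_le_rpow hs0 hs (by linarith)
  have h3 : (2 * D) ^ α * (2 * D) ^ (2 - α) = (2 * D) ^ (2:ℝ) := by
    rw [← Real.rpow_add h2D]; ring_nf
  have h4 : ((2 * D) ^ (2:ℝ) : ℝ) = 4 * D ^ 2 := by
    rw [show (2:ℝ) = ((2:ℕ):ℝ) by norm_num, Real.rpow_natCast]; ring
  calc x ^ α * s ^ (2 - α) ≤ (2*D) ^ α * (2*D) ^ (2-α) :=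
        mul_le_mul h1 h2 (Real.rpow_nonneg hs0 _) (Real.rpow_nonneg h2D.le _)
    _ = 4 * D ^ 2 := by rw [h3, h4]

lemma blochNorm_congr {α : ℝ} {f g : ℂ → ℂ} (h : Set.EqOn f g (ball (0:ℂ) 1)) :
    blochNorm α f = blochNorm α g := by
  unfold blochNorm
  congr 1
  · exact congrArg _ (h (mem_ball_self one_pos))
  · apply congrArg
    apply Set.image_congr
    intro z hz
    congr 1
    exact congrArg _ ((Filter.eventuallyEq_of_mem (isOpen_ball.mem_nhds hz) h).deriv_eq)

lemma bounded_below {E : Type*} [NormedAddCommGroup E] [NormedSpace ℂ E] [CompleteSpace E]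
    (T : E →L[ℂ] E) (hker : LinearMap.ker (T : E →ₗ[ℂ] E) = ⊥)
    (hcl : IsClosed (LinearMap.range (T : E →ₗ[ℂ] E) : Set E)) :
    ∃ c : ℝ, 0 < c ∧ ∀ f, ‖f‖ ≤ c * ‖T f‖ := by
  set p := LinearMap.range (T : E →ₗ[ℂ] E) with hp
  haveI : CompleteSpace p := hcl.completeSpace_coe
  set T' : E →L[ℂ] p := T.codRestrict p (fun x => LinearMap.mem_range_self _ x) with hT'
  have hker' : LinearMap.ker (T' : E →ₗ[ℂ] p) = ⊥ := by
    rw [hT', ContinuousLinearMap.ker_codRestrict]; exact hker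
  have hrange' : LinearMap.range (T' : E →ₗ[ℂ] p) = ⊤ := by
    ext y
    simp only [Submodule.mem_top, iff_true, LinearMap.mem_range]
    obtain ⟨x, hx⟩ := y.2
    exact ⟨x, Subtype.ext hx⟩
  set e := ContinuousLinearEquiv.ofBijective T' hker' hrange' with he
  refine ⟨max 1 ‖(e.symm : p →L[ℂ] E)‖, lt_of_lt_of_le one_pos (le_max_left _ _), fun f => ?_⟩
  have h1 : e f = T' f := rfl
  have h2 : f = e.symm (T' f) := by rw [← h1, ContinuousLinearEquiv.symm_apply_apply]
  calc ‖f‖ = ‖e.symm (T' f)‖ := by rw [← h2]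
    _ ≤ ‖(e.symm : p →L[ℂ] E)‖ * ‖T' f‖ := (e.symm : p →L[ℂ] E).le_opNorm _
    _ ≤ max 1 ‖(e.symm : p →L[ℂ] E)‖ * ‖T f‖ := by
        apply mul_le_mul (le_max_right _ _) _ (norm_nonneg _)
          (le_trans zero_le_one (le_max_left _ _))
        exact le_of_eq rfl

lemma ball_infinite : (ball (0:ℂ) 1).Infinite := by
  refine Set.infinite_of_injective_forall_mem (f := fun n : ℕ => ((1 / (n + 2) : ℝ) : ℂ)) ?_ ?_
  · intro a b hab
    simp only at hab
    have h := Complex.ofReal_injective hab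
    field_simp at h
    norm_cast at h
    omega
  · intro n
    simp only [mem_ball, Complex.dist_eq, sub_zero, cabs_ofReal]
    rw [abs_of_pos (by positivity)]
    rw [div_lt_one (by positivity)]
    linarith [Nat.cast_nonneg (α:=ℝ) n]

lemma E_not_findim {α : ℝ} (hα0 : 0 < α)
    {E : Type*} [NormedAddCommGroup E] [NormedSpace ℂ E]
    (ι : E →ₗ[ℂ] (ℂ → ℂ))
    (hrange : ∀ f : ℂ → ℂ,
      (∃ g : E, Set.EqOn (ι g) f (ball (0 : ℂ) 1)) ↔
        (DifferentiableOn ℂ f (ball (0 : ℂ) 1) ∧ BlochBdd α f)) :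
    ¬ FiniteDimensional ℂ E := by
  have hmono : ∀ n : ℕ, ∃ g : E, Set.EqOn (ι g) (fun z => z ^ n) (ball (0:ℂ) 1) := by
    intro n
    rw [hrange]
    refine ⟨(differentiable_pow n).differentiableOn, ?_⟩
    refine ⟨(n : ℝ), ?_⟩
    rintro y ⟨z, hz, rfl⟩
    simp only [mem_ball, Complex.dist_eq, sub_zero] at hz
    have hx1 : (1 - ‖z‖ ^ 2) ^ α ≤ 1 := by
      apply Real.rpow_le_one (by nlinarith [norm_nonneg z]) (by nlinarith) hα0.le
    have hx0 : (0:ℝ) ≤ (1 - ‖z‖ ^ 2) ^ α :=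
      Real.rpow_nonneg (by nlinarith [norm_nonneg z]) _
    have hd : deriv (fun z : ℂ => z ^ n) z = n * z ^ (n - 1) := by
      simp [deriv_pow]
    show (1 - ‖z‖ ^ 2) ^ α * ‖deriv (fun z : ℂ => z ^ n) z‖ ≤ (n:ℝ)
    rw [hd]
    have habs : ‖(n : ℂ) * z ^ (n-1)‖ ≤ n := by
      rw [norm_mul, norm_pow]
      have h1 : ‖(n : ℂ)‖ = n := by
        simpa using Complex.norm_natCast n
      rw [h1]
      have h2 : ‖z‖ ^ (n-1) ≤ 1 :=
        pow_le_one₀ (norm_nonneg z) hz.le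
      nlinarith [norm_nonneg z, pow_nonneg (norm_nonneg z) (n-1)]
    calc (1 - ‖z‖ ^ 2) ^ α * ‖(n:ℂ) * z ^ (n-1)‖
        ≤ 1 * (n:ℝ) := mul_le_mul hx1 habs (norm_nonneg _) one_pos.le
      _ = n := one_mul _
  choose gm hgm using hmono
  intro hfd
  have hli : LinearIndependent ℂ gm := by
    rw [linearIndependent_iff']
    intro s c hsum i his
    have hz : ∀ z ∈ ball (0:ℂ) 1, (∑ j ∈ s, Polynomial.C (c j) * Polynomial.X ^ j).eval z = 0 := by
      intro z hzb
      have h1 : ι (∑ j ∈ s, c j • gm j) z = 0 := by rw [hsum, map_zero]; rfl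
      rw [map_sum] at h1
      have h2 : (∑ j ∈ s, ι (c j • gm j)) z = ∑ j ∈ s, c j * z ^ j := by
        rw [Finset.sum_apply]
        apply Finset.sum_congr rfl
        intro j hj
        rw [map_smul]
        have := hgm j hzb
        simp only [Pi.smul_apply, smul_eq_mul]
        rw [this]
      rw [h2] at h1
      simpa [Polynomial.eval_finset_sum] using h1
    have hp0 : (∑ j ∈ s, Polynomial.C (c j) * Polynomial.X ^ j) = 0 := by
      apply Polynomial.eq_zero_of_infinite_isRoot
      apply Set.Infinite.mono _ ball_infinite
      intro z hzb
      exact hz z hzb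
    have := congrArg (fun p => Polynomial.coeff p i) hp0
    simpa [Polynomial.finset_sum_coeff, Polynomial.coeff_C_mul, Polynomial.coeff_X_pow,
      Finset.sum_ite_eq' s, his] using this
  haveI : Finite ℕ := hli.finite
  exact not_finite ℕ
lemma htf_hasDeriv {C b : ℂ} {z : ℂ} (hne : 1 - b*z ≠ 0) :
    HasDerivAt (fun z => C * (1 - b*z)⁻¹) (C * (b / (1-b*z)^2)) z := by
  have h1 : HasDerivAt (fun z : ℂ => 1 - b*z) (-b) z := by
    simpa using ((hasDerivAt_id z).const_mul b).const_sub 1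
  have h3 := (h1.inv hne).const_mul C
  exact h3.congr_deriv (by ring)

lemma psi_hasDeriv {c z : ℂ} (h : ‖c*z‖ < 1) :
    HasDerivAt (fun z => -Complex.log (1 - c*z)) (c / (1-c*z)) z := by
  have h1 : HasDerivAt (fun z : ℂ => 1 - c*z) (-c) z := by
    simpa using ((hasDerivAt_id z).const_mul c).const_sub 1
  have hsl : (1 - c*z) ∈ Complex.slitPlane := by
    rw [Complex.mem_slitPlane_iff]
    left
    have h2 := Complex.re_le_norm (c*z)
    have h3 : (1 - c*z).re = 1 - (c*z).re := by simp
    rw [h3]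
    linarith
  have h4 := (h1.clog hsl).neg
  exact h4.congr_deriv (by ring)


end

set_option maxHeartbeats 4000000 in
theorem stmt_13 (α : ℝ) (hα0 : 0 < α) (hα1 : α ≤ 1)
    {E : Type*} [NormedAddCommGroup E] [NormedSpace ℂ E] [CompleteSpace E]
    (ι : E →ₗ[ℂ] (ℂ → ℂ))
    (hhol : ∀ f : E, DifferentiableOn ℂ (ι f) (ball (0 : ℂ) 1))
    (hinj : ∀ f g : E, Set.EqOn (ι f) (ι g) (ball (0 : ℂ) 1) → f = g)
    (hrange : ∀ f : ℂ → ℂ,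
      (∃ g : E, Set.EqOn (ι g) f (ball (0 : ℂ) 1)) ↔
        (DifferentiableOn ℂ f (ball (0 : ℂ) 1) ∧ BlochBdd α f))
    (hnorm : ∀ g : E, ‖g‖ = blochNorm α (ι g))
    -- `u ∈ M(B_α(𝔻))` with induced multiplication operator `Mu`
    (u : ℂ → ℂ) (hu : DifferentiableOn ℂ u (ball (0 : ℂ) 1))
    (humult : ∀ f : E, ∃ g : E, ∀ z ∈ ball (0 : ℂ) 1, ι g z = u z * ι f z)
    (Mu : E →L[ℂ] E)
    (hMu : ∀ f : E, ∀ z ∈ ball (0 : ℂ) 1, ι (Mu f) z = u z * ι f z)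
    -- `u` extends continuously to the closed unit disk
    (hext : ∃ w : ℂ → ℂ, ContinuousOn w (closedBall (0 : ℂ) 1) ∧
      ∀ z ∈ ball (0 : ℂ) 1, w z = u z)
    (hFred : IsFredholmOp Mu) :
    ∃ r ∈ Set.Ioo (0 : ℝ) 1, ∃ δ : ℝ, 0 < δ ∧
      ∀ z : ℂ, r ≤ ‖z‖ → ‖z‖ < 1 → δ ≤ ‖u z‖ := by
  classical
  obtain ⟨w, hw, hwu⟩ := hext
  rcases Classical.em (∃ ζ : ℂ, ‖ζ‖ = 1 ∧ w ζ = 0) with hζex | hno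
  swap
  · push_neg at hno
    exact stepI hw hwu hno
  exfalso
  obtain ⟨ζ, hζ1, hζ0⟩ := hζex
  have hbz : ∀ z : ℂ, z ∈ ball (0:ℂ) 1 ↔ ‖z‖ < 1 := by
    intro z; simp [Complex.dist_eq]
  -- derivative congruence helper
  have hdercongr : ∀ (f g : ℂ → ℂ), Set.EqOn f g (ball (0:ℂ) 1) →
      ∀ z ∈ ball (0:ℂ) 1, deriv f z = deriv g z := fun f g h z hz =>
    (Filter.eventuallyEq_of_mem (isOpen_ball.mem_nhds hz) h).deriv_eq
  -- kernel trivial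
  have hker : LinearMap.ker (Mu : E →ₗ[ℂ] E) = ⊥ := by
    have hune : ∃ z₀ ∈ ball (0:ℂ) 1, u z₀ ≠ 0 := by
      by_contra h0
      push_neg at h0
      have hMuz : ∀ g : E, Mu g = 0 := by
        intro g
        apply hinj
        intro z hz
        rw [hMu g z hz, h0 z hz, zero_mul, map_zero]
        rfl
      have hk : LinearMap.ker (Mu : E →ₗ[ℂ] E) = ⊤ := by
        rw [eq_top_iff]
        intro g _
        exact LinearMap.mem_ker.mpr (hMuz g)
      have hfd := hFred.2.1
      rw [hk] at hfd
      exact E_not_findim hα0 ι hrange (Submodule.topEquiv.finiteDimensional)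
    obtain ⟨z₀, hz₀, hz₀ne⟩ := hune
    rw [eq_bot_iff]
    intro f hf
    have hMf : Mu f = 0 := LinearMap.mem_ker.mp hf
    have hcu : ContinuousAt u z₀ := hu.continuousOn.continuousAt (isOpen_ball.mem_nhds hz₀)
    have hev : ι f =ᶠ[nhds z₀] 0 := by
      have h1 : ∀ᶠ z in nhds z₀, u z ≠ 0 := hcu.eventually_ne hz₀ne
      have h2 : ∀ᶠ z in nhds z₀, z ∈ ball (0:ℂ) 1 := isOpen_ball.eventually_mem hz₀
      filter_upwards [h1, h2] with z hz1 hz2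
      have h3 := hMu f z hz2
      rw [hMf] at h3
      have h4 : (0:ℂ) = u z * ι f z := by rw [← h3, map_zero]; rfl
      exact (mul_eq_zero.mp h4.symm).resolve_left hz1
    have han : AnalyticOnNhd ℂ (ι f) (ball (0:ℂ) 1) := (hhol f).analyticOnNhd isOpen_ball
    have heq := han.eqOn_zero_of_preconnected_of_eventuallyEq_zero
      (convex_ball (0:ℂ) 1).isPreconnected hz₀ hev
    have hf0 : f = 0 := hinj f 0 (by
      intro z hz
      rw [map_zero]
      exact heq hz)
    rw [Submodule.mem_bot]
    exact hf0
  obtain ⟨c, hc0, hcb⟩ := bounded_below Mu hker hFred.1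
  -- sup norm of u
  obtain ⟨W0, hW0⟩ := (isCompact_closedBall (0:ℂ) 1).exists_bound_of_continuousOn hw
  set W := max W0 1 with hWdef
  have hW1 : (1:ℝ) ≤ W := le_max_right _ _
  have hW0' : (0:ℝ) < W := by linarith
  have hWu : ∀ z ∈ ball (0:ℂ) 1, ‖u z‖ ≤ W := by
    intro z hz
    rw [← hwu z hz]
    exact le_trans (le_trans (le_rfl)
      (hW0 z (ball_subset_closedBall hz))) (le_max_left _ _)
  -- u is in the Bloch space
  obtain ⟨g1, hg1⟩ : ∃ g : E, Set.EqOn (ι g) (fun _ => (1:ℂ)) (ball (0:ℂ) 1) := by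
    apply (hrange _).mpr
    refine ⟨differentiableOn_const _, ⟨0, ?_⟩⟩
    rintro y ⟨z, hz, rfl⟩
    simp
  obtain ⟨gu, hgu'⟩ := humult g1
  have hgu : Set.EqOn (ι gu) u (ball (0:ℂ) 1) := fun z hz => by
    rw [hgu' z hz, hg1 hz, mul_one]
  have hBu : BlochBdd α (ι gu) := ((hrange (ι gu)).mp ⟨gu, fun _ _ => rfl⟩).2
  set M := sSup ((fun z => (1 - ‖z‖ ^ 2) ^ α *
      ‖deriv (ι gu) z‖) '' ball (0 : ℂ) 1) with hMdef
  have hM : ∀ z ∈ ball (0:ℂ) 1,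
      (1 - ‖z‖^2)^α * ‖deriv u z‖ ≤ M := by
    intro z hz
    rw [← hdercongr _ _ hgu z hz]
    exact le_csSup hBu (mem_image_of_mem _ hz)
  have hM0 : 0 ≤ M := by
    refine le_trans ?_ (hM 0 (mem_ball_self one_pos))
    exact mul_nonneg (Real.rpow_nonneg (by simp) _) (norm_nonneg _)
  -- basic sup bounds
  have hupper : ∀ (f : ℂ → ℂ) (C : ℝ),
      (∀ z ∈ ball (0:ℂ) 1, (1 - ‖z‖^2)^α * ‖deriv f z‖ ≤ C) →
      blochNorm α f ≤ ‖f 0‖ + C := by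
    intro f C hC
    unfold blochNorm
    apply add_le_add_right
    apply csSup_le ((nonempty_ball.mpr one_pos).image _)
    rintro y ⟨z, hz, rfl⟩
    exact hC z hz
  have hlow : ∀ (g : E), ∀ z ∈ ball (0:ℂ) 1,
      (1 - ‖z‖^2)^α * ‖deriv (ι g) z‖ ≤ ‖g‖ := by
    intro g z hz
    rw [hnorm g]
    unfold blochNorm
    have hb : BlochBdd α (ι g) := ((hrange (ι g)).mp ⟨g, fun _ _ => rfl⟩).2
    have h1 := le_csSup hb (mem_image_of_mem _ hz)
    have h0 : 0 ≤ ‖ι g 0‖ := norm_nonneg _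
    calc (1 - ‖z‖^2)^α * ‖deriv (ι g) z‖
        ≤ sSup ((fun z => (1 - ‖z‖ ^ 2) ^ α *
            ‖deriv (ι g) z‖) '' ball (0 : ℂ) 1) := h1
      _ ≤ _ := by linarith
  have hmem : ∀ (f : ℂ → ℂ), DifferentiableOn ℂ f (ball (0:ℂ) 1) → ∀ C : ℝ,
      (∀ z ∈ ball (0:ℂ) 1, (1 - ‖z‖^2)^α * ‖deriv f z‖ ≤ C) →
      ∃ g : E, Set.EqOn (ι g) f (ball (0:ℂ) 1) ∧ ‖g‖ = blochNorm α f := by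
    intro f hdf C hC
    have hb : BlochBdd α f := by
      refine ⟨C, ?_⟩
      rintro y ⟨z, hz, rfl⟩
      exact hC z hz
    obtain ⟨g, hg⟩ := (hrange f).mpr ⟨hdf, hb⟩
    exact ⟨g, hg, by rw [hnorm g, blochNorm_congr hg]⟩
  -- Term A estimate
  have hTA : ∀ ε : ℝ, 0 < ε → ∃ θ : ℝ, θ < 1 ∧ ∀ t : ℝ, θ ≤ t → 1/2 ≤ t → t < 1 →
      ∀ z ∈ ball (0:ℂ) 1,
      (1 - ‖z‖^2)^α * ‖deriv u z‖ *
        ((1-t^2)^(2-α) / ‖1 - ((t:ℂ) * (starRingEnd ℂ) ζ) * z‖) ≤ ε := by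
    intro ε hε
    rcases lt_or_eq_of_le hα1 with hαlt | hαeq
    · -- case α < 1
      set m := min 1 (ε/(2*M+2)) with hmdef
      have hm0 : 0 < m := lt_min one_pos (by positivity)
      set η := m^((1-α)⁻¹ : ℝ) with hηdef
      have hη0 : 0 < η := Real.rpow_pos_of_pos hm0 _
      refine ⟨1 - η/2, by linarith, ?_⟩
      intro t hθt ht2 ht1 z hz
      have hz1 : ‖z‖ < 1 := (hbz z).mp hz
      have ht0 : 0 < t := by linarith
      have hs0' : (0:ℝ) < 1-t^2 := by nlinarith
      have habsb : ‖(t:ℂ) * (starRingEnd ℂ) ζ‖ = t := by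
        rw [norm_mul, cabs_ofReal, Complex.norm_conj, hζ1, mul_one, abs_of_nonneg ht0.le]
      have hb1 : ‖(t:ℂ) * (starRingEnd ℂ) ζ‖ ≤ 1 := by rw [habsb]; linarith
      set D := ‖1 - ((t:ℂ) * (starRingEnd ℂ) ζ) * z‖ with hDdef
      have hD0 : 0 < D := lt_of_lt_of_le (by linarith) (aux_D_pos hb1 hz1)
      have hsD : 1-t^2 ≤ 2 * D := by
        have h5 := aux_s_le hb1 hz1
        rw [habsb] at h5
        exact h5
      have hsle : 1-t^2 ≤ η := by nlinarith
      have hs1a : (1-t^2)^((1:ℝ)-α) ≤ m := by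
        calc (1-t^2)^((1:ℝ)-α) ≤ η^((1:ℝ)-α) :=
              Real.rpow_le_rpow hs0'.le hsle (by linarith)
          _ = m := by rw [hηdef]; exact Real.rpow_inv_rpow hm0.le (by linarith : (1:ℝ)-α ≠ 0)
      have hsplit : (1-t^2)^(2-α) = (1-t^2)^((1:ℝ)-α) * (1-t^2) := by
        rw [show (2-α) = ((1:ℝ)-α)+1 by ring, Real.rpow_add hs0', Real.rpow_one]
      have hM' := hM z hz
      have hfrac : (1-t^2)^(2-α)/D ≤ 2*m := by
        rw [hsplit, div_le_iff₀ hD0]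
        nlinarith [Real.rpow_nonneg hs0'.le ((1:ℝ)-α)]
      calc (1 - ‖z‖^2)^α * ‖deriv u z‖ * ((1-t^2)^(2-α)/D)
          ≤ M * (2*m) := by
            apply mul_le_mul hM' hfrac
              (div_nonneg (Real.rpow_nonneg hs0'.le _) hD0.le) hM0
        _ ≤ ε := by
            have hmle : m ≤ ε/(2*M+2) := min_le_right _ _
            have he : (ε/(2*M+2))*(2*M+2) = ε := by field_simp
            nlinarith
    · -- case α = 1
      subst hαeq
      -- logarithmic estimate for multipliers of the Bloch space
      have hlog : ∀ b0 : ℂ, ‖b0‖ < 1 →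
          (1 - ‖b0‖^2) * ‖deriv u b0‖ *
            Real.log ((1 - ‖b0‖^2)⁻¹) ≤ 2*‖Mu‖ + W := by
        intro b0 hb0
        set cb := (starRingEnd ℂ) b0 with hcbdef
        have hcb1 : ‖cb‖ < 1 := by rw [hcbdef, Complex.norm_conj]; exact hb0
        set ψ : ℂ → ℂ := fun z => -Complex.log (1 - cb*z) with hψdef
        have hψd : ∀ z ∈ ball (0:ℂ) 1, HasDerivAt ψ (cb/(1-cb*z)) z := by
          intro z hz
          apply psi_hasDeriv
          rw [norm_mul]
          have hz1 := (hbz z).mp hz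
          nlinarith [norm_nonneg cb, norm_nonneg z]
        have hψdiff : DifferentiableOn ℂ ψ (ball (0:ℂ) 1) :=
          fun z hz => ((hψd z hz).differentiableAt).differentiableWithinAt
        have hψbd : ∀ z ∈ ball (0:ℂ) 1,
            (1-‖z‖^2)^(1:ℝ) * ‖deriv ψ z‖ ≤ 2 := by
          intro z hz
          have hz1 := (hbz z).mp hz
          rw [(hψd z hz).deriv, Real.rpow_one, norm_div]
          have hD0 : 0 < ‖1-cb*z‖ :=
            lt_of_lt_of_le (by linarith) (aux_D_pos hcb1.le hz1)
          have hxD := aux_x_le hcb1.le hz1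
          rw [mul_div_assoc', div_le_iff₀ hD0]
          nlinarith [norm_nonneg cb, norm_nonneg z,
            mul_nonneg (norm_nonneg (1-cb*z)) (norm_nonneg cb)]
        obtain ⟨G, hGEq, hGnorm⟩ := hmem ψ hψdiff 2 hψbd
        have hψ0 : ψ 0 = 0 := by
          simp only [hψdef, mul_zero, sub_zero, Complex.log_one, neg_zero]
        have hGle : ‖G‖ ≤ 2 := by
          rw [hGnorm]
          refine le_trans (hupper ψ 2 hψbd) ?_
          rw [hψ0]
          simp
        have hMuG : Set.EqOn (ι (Mu G)) (fun z => u z * ψ z) (ball (0:ℂ) 1) := fun z hz => by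
          rw [hMu G z hz, hGEq hz]
        have hb0mem : b0 ∈ ball (0:ℂ) 1 := (hbz b0).mpr hb0
        have hlowb := hlow (Mu G) b0 hb0mem
        rw [hdercongr _ _ hMuG b0 hb0mem] at hlowb
        have hud : HasDerivAt u (deriv u b0) b0 :=
          (hu.differentiableAt (isOpen_ball.mem_nhds hb0mem)).hasDerivAt
        have hpr := hud.mul (hψd b0 hb0mem)
        rw [show deriv (fun z => u z * ψ z) b0 = _ from hpr.deriv, Real.rpow_one] at hlowb
        have hs0b : (0:ℝ) < 1 - ‖b0‖^2 := by nlinarith [norm_nonneg b0]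
        have hcbb : 1 - cb*b0 = (((1 - ‖b0‖^2):ℝ):ℂ) := by
          rw [hcbdef, ← Complex.normSq_eq_conj_mul_self, Complex.normSq_eq_norm_sq]
          push_cast
          ring
        have hψb0 : ‖ψ b0‖ = Real.log ((1-‖b0‖^2)⁻¹) := by
          have he1 : ψ b0 = -Complex.log (1 - cb*b0) := rfl
          rw [he1, hcbb, norm_neg, ← Complex.ofReal_log hs0b.le,
            cabs_ofReal, Real.log_inv]
          exact abs_of_nonpos (Real.log_nonpos hs0b.le (by nlinarith [norm_nonneg b0]))
        have hdval : ‖u b0 * (cb/(1-cb*b0))‖ ≤ W / (1-‖b0‖^2) := by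
          rw [norm_mul, norm_div, hcbb, cabs_ofReal, abs_of_nonneg hs0b.le,
            hcbdef, Complex.norm_conj, mul_div_assoc']
          have hb0W := hWu b0 hb0mem
          gcongr
          nlinarith [norm_nonneg (u b0), norm_nonneg b0]
        have htri : ‖deriv u b0‖ * ‖ψ b0‖ ≤
            ‖deriv u b0 * ψ b0 + u b0 * (cb/(1-cb*b0))‖ +
              ‖u b0 * (cb/(1-cb*b0))‖ := by
          have h1 := norm_add_le (deriv u b0 * ψ b0 + u b0 * (cb/(1-cb*b0)))
            (-(u b0 * (cb/(1-cb*b0))))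
          rw [add_neg_cancel_right, norm_neg, norm_mul] at h1
          exact h1
        have hMuGle : ‖Mu G‖ ≤ 2*‖Mu‖ := by
          calc ‖Mu G‖ ≤ ‖Mu‖ * ‖G‖ := Mu.le_opNorm G
            _ ≤ ‖Mu‖ * 2 := mul_le_mul_of_nonneg_left hGle (norm_nonneg _)
            _ = 2*‖Mu‖ := by ring
        calc (1 - ‖b0‖^2) * ‖deriv u b0‖ *
              Real.log ((1-‖b0‖^2)⁻¹)
            = (1 - ‖b0‖^2) * (‖deriv u b0‖ * ‖ψ b0‖) := by
              rw [hψb0]; ring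
          _ ≤ (1 - ‖b0‖^2) *
                (‖deriv u b0 * ψ b0 + u b0 * (cb/(1-cb*b0))‖ +
                  ‖u b0 * (cb/(1-cb*b0))‖) :=
              mul_le_mul_of_nonneg_left htri hs0b.le
          _ = (1 - ‖b0‖^2) *
                ‖deriv u b0 * ψ b0 + u b0 * (cb/(1-cb*b0))‖ +
              (1 - ‖b0‖^2) * ‖u b0 * (cb/(1-cb*b0))‖ := by ring
          _ ≤ ‖Mu G‖ + (1 - ‖b0‖^2) * (W/(1-‖b0‖^2)) :=
              add_le_add hlowb (mul_le_mul_of_nonneg_left hdval hs0b.le)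
          _ ≤ 2*‖Mu‖ + W := by
              have he2 : (1 - ‖b0‖^2)*(W/(1-‖b0‖^2)) = W := by
                field_simp
              rw [he2]
              linarith
      set L := 2*‖Mu‖ + W with hLdef
      have hL0 : 0 ≤ L := add_nonneg (by positivity) hW0'.le
      set σ := min (1/2) (Real.exp (-((4*L+1)/ε))) with hσdef
      have hσ0 : 0 < σ := lt_min (by norm_num) (Real.exp_pos _)
      have hσhalf : σ ≤ 1/2 := min_le_left _ _
      have hlogσ : (4*L+1)/ε ≤ Real.log σ⁻¹ := by
        have h1 : σ ≤ Real.exp (-((4*L+1)/ε)) := min_le_right _ _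
        have h2 : Real.exp ((4*L+1)/ε) ≤ σ⁻¹ := by
          have h3 := inv_anti₀ hσ0 h1
          rw [Real.exp_neg, inv_inv] at h3
          exact h3
        calc (4*L+1)/ε = Real.log (Real.exp ((4*L+1)/ε)) := (Real.log_exp _).symm
          _ ≤ Real.log σ⁻¹ := Real.log_le_log (Real.exp_pos _) h2
      have hεσ0 : 0 < ε*σ/(8*(M+1)) := by positivity
      refine ⟨1 - ε*σ/(8*(M+1)), by linarith, ?_⟩
      intro t hθt ht2 ht1 z hz
      have hz1 : ‖z‖ < 1 := (hbz z).mp hz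
      have ht0 : 0 < t := by linarith
      have hs0' : (0:ℝ) < 1-t^2 := by nlinarith
      have habsb : ‖(t:ℂ) * (starRingEnd ℂ) ζ‖ = t := by
        rw [norm_mul, cabs_ofReal, Complex.norm_conj, hζ1, mul_one, abs_of_nonneg ht0.le]
      have hb1 : ‖(t:ℂ) * (starRingEnd ℂ) ζ‖ ≤ 1 := by rw [habsb]; linarith
      set D := ‖1 - ((t:ℂ) * (starRingEnd ℂ) ζ) * z‖ with hDdef
      have hD0 : 0 < D := lt_of_lt_of_le (by linarith) (aux_D_pos hb1 hz1)
      have hxD : 1 - ‖z‖^2 ≤ 2*D := aux_x_le hb1 hz1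
      have hsD : 1-t^2 ≤ 2 * D := by
        have h5 := aux_s_le hb1 hz1
        rw [habsb] at h5
        exact h5
      have hx0 : (0:ℝ) ≤ 1 - ‖z‖^2 := by nlinarith [norm_nonneg z]
      have hx0' : (0:ℝ) < 1 - ‖z‖^2 := by nlinarith [norm_nonneg z]
      have h21 : (2:ℝ) - 1 = 1 := by norm_num
      rw [h21, Real.rpow_one, Real.rpow_one]
      by_cases hxσ : 1 - ‖z‖^2 ≤ σ
      · have hlz := hlog z hz1
        have hlogx : Real.log σ⁻¹ ≤ Real.log ((1-‖z‖^2)⁻¹) :=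
          Real.log_le_log (by positivity) (by
            apply inv_anti₀ hx0' hxσ)
        have ha0 : 0 ≤ (1-‖z‖^2)*‖deriv u z‖ :=
          mul_nonneg hx0 (norm_nonneg _)
        have h3 : (1-‖z‖^2)*‖deriv u z‖ * ((4*L+1)/ε) ≤ L :=
          le_trans (mul_le_mul_of_nonneg_left (le_trans hlogσ hlogx) ha0) hlz
        have h3' : (1-‖z‖^2)*‖deriv u z‖ * (4*L+1) ≤ L * ε := by
          have h4 := mul_le_mul_of_nonneg_right h3 hε.le
          have he3 : (1-‖z‖^2)*‖deriv u z‖ * ((4*L+1)/ε) * ε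
              = (1-‖z‖^2)*‖deriv u z‖ * (4*L+1) := by
            field_simp
          rw [he3] at h4
          exact h4
        have hxdu : (1-‖z‖^2)*‖deriv u z‖ ≤ ε/4 := by nlinarith
        have hsDle : (1-t^2)/D ≤ 2 := by rw [div_le_iff₀ hD0]; linarith
        calc (1-‖z‖^2) * ‖deriv u z‖ * ((1-t^2)/D)
            ≤ (ε/4) * 2 := by
              apply mul_le_mul hxdu hsDle (div_nonneg hs0'.le hD0.le) (by positivity)
          _ ≤ ε := by linarith
      · push_neg at hxσ
        have hM' := hM z hz
        rw [Real.rpow_one] at hM'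
        have hfrac : (1-t^2)/D ≤ 2*(1-t^2)/σ := by
          rw [div_le_div_iff₀ hD0 hσ0]
          nlinarith
        have hstle : 1-t^2 ≤ ε*σ/(4*(M+1)) := by
          have hM1 : (0:ℝ) < M+1 := by linarith
          have h2q : 2*(ε*σ/(8*(M+1))) = ε*σ/(4*(M+1)) := by
            field_simp
            ring
          nlinarith
        calc (1-‖z‖^2) * ‖deriv u z‖ * ((1-t^2)/D)
            ≤ M * (2*(1-t^2)/σ) := by
              apply mul_le_mul hM' hfrac (div_nonneg hs0'.le hD0.le) hM0
          _ ≤ M * (2*(ε*σ/(4*(M+1)))/σ) := by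
              have h6 : 2*(1-t^2)/σ ≤ 2*(ε*σ/(4*(M+1)))/σ := by
                rw [div_le_div_iff₀ hσ0 hσ0]
                nlinarith
              exact mul_le_mul_of_nonneg_left h6 hM0
          _ ≤ ε := by
              have he4 : M * (2*(ε*σ/(4*(M+1)))/σ) = M*ε/(2*(M+1)) := by
                field_simp
                ring
              rw [he4]
              rw [div_le_iff₀ (by positivity : (0:ℝ) < 2*(M+1))]
              nlinarith

  -- Term B estimate
  have hTB : ∀ ε : ℝ, 0 < ε → ∃ θ : ℝ, θ < 1 ∧ ∀ t : ℝ, θ ≤ t → 1/2 ≤ t → t < 1 →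
      ∀ z ∈ ball (0:ℂ) 1,
      (1 - ‖z‖^2)^α * ‖u z‖ *
        ((1-t^2)^(2-α) * t / ‖1 - ((t:ℂ) * (starRingEnd ℂ) ζ) * z‖^2) ≤ ε := by
    intro ε hε
    have hζmem : ζ ∈ closedBall (0:ℂ) 1 := by
      simp [Complex.dist_eq, hζ1]
    have hcont := hw ζ hζmem
    rw [Metric.continuousWithinAt_iff] at hcont
    obtain ⟨ρ, hρ0, hρ⟩ := hcont (ε/4) (by positivity)
    have hq32 : 0 < ε*ρ^2/(32*W) := by positivity
    refine ⟨max (1 - ρ/2) (1 - ε*ρ^2/(32*W)),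
      max_lt (by linarith) (by linarith), ?_⟩
    intro t hθt ht2 ht1 z hz
    have hz1 : ‖z‖ < 1 := (hbz z).mp hz
    have ht0 : 0 < t := by linarith
    have hs0 : (0:ℝ) ≤ 1 - t^2 := by nlinarith
    have hs0' : (0:ℝ) < 1 - t^2 := by nlinarith
    have habsb : ‖(t:ℂ) * (starRingEnd ℂ) ζ‖ = t := by
      rw [norm_mul, cabs_ofReal, Complex.norm_conj, hζ1, mul_one, abs_of_nonneg ht0.le]
    have hb1 : ‖(t:ℂ) * (starRingEnd ℂ) ζ‖ ≤ 1 := by rw [habsb]; linarith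
    set D := ‖1 - ((t:ℂ) * (starRingEnd ℂ) ζ) * z‖ with hDdef
    have hD0 : 0 < D := lt_of_lt_of_le (by linarith) (aux_D_pos hb1 hz1)
    have hxD : 1 - ‖z‖^2 ≤ 2*D := aux_x_le hb1 hz1
    have hsD : 1-t^2 ≤ 2 * D := by
      have h5 := aux_s_le hb1 hz1
      rw [habsb] at h5
      exact h5
    have hx0 : (0:ℝ) ≤ 1 - ‖z‖^2 := by nlinarith [norm_nonneg z]
    have hθ1 : 1 - ρ/2 ≤ t := le_trans (le_max_left _ _) hθt
    have hθ2 : 1 - ε*ρ^2/(32*W) ≤ t := le_trans (le_max_right _ _) hθt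
    by_cases hnear : ‖z - ζ‖ < ρ
    · have hzmem : z ∈ closedBall (0:ℂ) 1 := ball_subset_closedBall hz
      have h6 := hρ hzmem (by rw [Complex.dist_eq]; exact hnear)
      have huz : ‖u z‖ ≤ ε/4 := by
        rw [← hwu z hz]
        have he : dist (w z) (w ζ) = ‖w z‖ := by
          rw [hζ0, Complex.dist_eq, sub_zero]
        rw [he] at h6
        exact h6.le
      have hprod := aux_prod hα0 hα1 hx0 hs0 hD0 hxD hsD
      have e3 : (1-‖z‖^2)^α * ‖u z‖ * ((1-t^2)^(2-α)*t/D^2)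
          = ((1-‖z‖^2)^α*(1-t^2)^(2-α)) * (‖u z‖ * t) / D^2 := by
        ring
      rw [e3, div_le_iff₀ (by positivity)]
      have h7 : ‖u z‖ * t ≤ ε/4 := by
        nlinarith [norm_nonneg (u z)]
      calc ((1-‖z‖^2)^α*(1-t^2)^(2-α)) * (‖u z‖ * t)
          ≤ (4*D^2) * (ε/4) := by
            apply mul_le_mul hprod h7 (mul_nonneg (norm_nonneg _) ht0.le)
              (by positivity)
        _ = ε * D^2 := by ring
    · have hfar : ρ ≤ ‖z - ζ‖ := not_lt.mp hnear
      have hcζ : (starRingEnd ℂ) ζ * ζ = 1 := by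
        rw [← Complex.normSq_eq_conj_mul_self, Complex.normSq_eq_norm_sq, hζ1]
        norm_num
      have hDform : D = ‖ζ - (t:ℂ)*z‖ := by
        have he : 1 - ((t:ℂ)*(starRingEnd ℂ) ζ)*z = (starRingEnd ℂ) ζ * (ζ - (t:ℂ)*z) := by
          linear_combination -hcζ
        rw [hDdef, he, norm_mul, Complex.norm_conj, hζ1, one_mul]
      have htriangle : ‖ζ - z‖ - ‖(t:ℂ)*z - z‖
          ≤ ‖ζ - (t:ℂ)*z‖ := by
        have h9 := norm_sub_le_norm_sub_add_norm_sub ζ ((t:ℂ)*z) z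
        linarith
      have htz : ‖(t:ℂ)*z - z‖ = (1-t)*‖z‖ := by
        rw [show (t:ℂ)*z - z = -((((1-t):ℝ):ℂ)*z) by push_cast; ring, norm_neg,
          norm_mul, cabs_ofReal, abs_of_nonneg (by linarith : (0:ℝ) ≤ 1-t)]
      have hsub : ‖ζ - z‖ = ‖z - ζ‖ :=
        norm_sub_rev ζ z
      have hDlow : ρ/2 ≤ D := by
        rw [hDform]
        rw [hsub, htz] at htriangle
        have h10 : (1-t)*‖z‖ ≤ 1-t := by
          nlinarith [norm_nonneg z, hz1.le]
        linarith
      have hXle1 : (1-‖z‖^2)^α ≤ 1 :=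
        Real.rpow_le_one hx0 (by nlinarith [norm_nonneg z]) hα0.le
      have hS2 : (1-t^2)^(2-α) ≤ 1-t^2 := by
        calc (1-t^2)^(2-α) ≤ (1-t^2)^(1:ℝ) :=
              Real.rpow_le_rpow_of_exponent_ge hs0' (by nlinarith) (by linarith)
          _ = 1-t^2 := Real.rpow_one _
      have hUle := hWu z hz
      have hst : 1-t^2 ≤ ε*ρ^2/(16*W) := by
        have h2q : 2*(ε*ρ^2/(32*W)) = ε*ρ^2/(16*W) := by ring
        nlinarith
      have hq : (1-t^2)^(2-α) * t / D^2 ≤ (ε*ρ^2/(16*W)) / (ρ^2/4) := by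
        apply div_le_div₀ (by positivity) ?_ (by positivity) ?_
        · nlinarith [Real.rpow_nonneg hs0 (2-α)]
        · calc ρ^2/4 = (ρ/2)^2 := by ring
            _ ≤ D^2 := pow_le_pow_left₀ (by positivity) hDlow 2
      calc (1-‖z‖^2)^α * ‖u z‖ * ((1-t^2)^(2-α)*t/D^2)
          ≤ 1 * W * ((ε*ρ^2/(16*W))/(ρ^2/4)) := by
            apply mul_le_mul (mul_le_mul hXle1 hUle (norm_nonneg _) one_pos.le) hq
              (by positivity) (by positivity)
        _ = ε/4 := by
            field_simp
            ring
        _ ≤ ε := by linarith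

  obtain ⟨θA, hθA1, hA⟩ := hTA (1/(8*c)) (by positivity)
  obtain ⟨θB, hθB1, hB⟩ := hTB (1/(8*c)) (by positivity)
  set t : ℝ := max (max θA θB) (max (1/2) (1 - 1/(32*c*W))) with htdef
  have htθA : θA ≤ t := le_trans (le_max_left _ _) (le_max_left _ _)
  have htθB : θB ≤ t := le_trans (le_max_right _ _) (le_max_left _ _)
  have ht2 : 1/2 ≤ t := le_trans (le_max_left _ _) (le_max_right _ _)
  have htW : 1 - 1/(32*c*W) ≤ t := le_trans (le_max_right _ _) (le_max_right _ _)
  have ht1 : t < 1 := by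
    apply max_lt (max_lt hθA1 hθB1)
    apply max_lt (by norm_num)
    have : 0 < 1/(32*c*W) := by positivity
    linarith
  have ht0 : 0 < t := by linarith
  have hs0 : 0 < 1 - t^2 := by nlinarith
  have hs1 : 1 - t^2 ≤ 1 := by nlinarith
  have hs2t : 1 - t^2 ≤ 2*(1-t) := by nlinarith
  set b : ℂ := (t:ℂ) * (starRingEnd ℂ) ζ with hbdef
  have habsb : ‖b‖ = t := by
    rw [hbdef, norm_mul, cabs_ofReal, Complex.norm_conj, hζ1, mul_one,
      abs_of_nonneg ht0.le]
  have hb1 : ‖b‖ ≤ 1 := by rw [habsb]; exact ht1.le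
  have hC0 : 0 < (1-t^2)^(2-α) := Real.rpow_pos_of_pos hs0 _
  have hCles : (1-t^2)^(2-α) ≤ 1-t^2 := by
    calc (1-t^2)^(2-α) ≤ (1-t^2)^(1:ℝ) :=
          Real.rpow_le_rpow_of_exponent_ge hs0 hs1 (by linarith)
      _ = 1-t^2 := Real.rpow_one _
  set h : ℂ → ℂ := fun z => (((1-t^2)^(2-α) : ℝ) : ℂ) * (1 - b*z)⁻¹ with hhdef
  have hDf : ∀ z ∈ ball (0:ℂ) 1, 0 < ‖1 - b*z‖ ∧
      1 - ‖z‖^2 ≤ 2*‖1-b*z‖ ∧ 1-t^2 ≤ 2*‖1-b*z‖ ∧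
      1 - b*z ≠ 0 := by
    intro z hz
    have hz1 : ‖z‖ < 1 := (hbz z).mp hz
    refine ⟨lt_of_lt_of_le (by linarith) (aux_D_pos hb1 hz1), aux_x_le hb1 hz1, ?_,
      aux_ne hb1 hz1⟩
    have h5 := aux_s_le hb1 hz1
    rw [habsb] at h5
    exact h5
  have hhd : ∀ z ∈ ball (0:ℂ) 1,
      HasDerivAt h ((((1-t^2)^(2-α) : ℝ) : ℂ) * (b / (1 - b*z)^2)) z :=
    fun z hz => htf_hasDeriv (hDf z hz).2.2.2
  have habsh : ∀ z ∈ ball (0:ℂ) 1,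
      ‖h z‖ = (1-t^2)^(2-α) / ‖1-b*z‖ := by
    intro z hz
    simp only [hhdef, norm_mul, norm_inv, cabs_ofReal, abs_of_nonneg hC0.le,
      div_eq_mul_inv]
  have habsdh : ∀ z ∈ ball (0:ℂ) 1, ‖deriv h z‖ =
      (1-t^2)^(2-α) * t / ‖1-b*z‖^2 := by
    intro z hz
    rw [(hhd z hz).deriv, norm_mul, norm_div, norm_pow, cabs_ofReal,
      abs_of_nonneg hC0.le, habsb]
    ring
  have hhdiff : DifferentiableOn ℂ h (ball (0:ℂ) 1) :=
    fun z hz => ((hhd z hz).differentiableAt).differentiableWithinAt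
  have hx0' : ∀ z : ℂ, z ∈ ball (0:ℂ) 1 → 0 ≤ 1 - ‖z‖^2 := by
    intro z hz
    have := (hbz z).mp hz
    nlinarith [norm_nonneg z]
  have hhbd : ∀ z ∈ ball (0:ℂ) 1,
      (1 - ‖z‖^2)^α * ‖deriv h z‖ ≤ 4 := by
    intro z hz
    rw [habsdh z hz]
    obtain ⟨hD0, hxD, hsD, _⟩ := hDf z hz
    have hprod := aux_prod hα0 hα1 (hx0' z hz) hs0.le hD0 hxD hsD
    have e1 : (1 - ‖z‖^2)^α * ((1-t^2)^(2-α) * t / ‖1-b*z‖^2)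
        = ((1 - ‖z‖^2)^α * (1-t^2)^(2-α)) * t / ‖1-b*z‖^2 := by
      ring
    rw [e1, div_le_iff₀ (by positivity)]
    have hnn : 0 ≤ (1 - ‖z‖^2)^α * (1-t^2)^(2-α) :=
      mul_nonneg (Real.rpow_nonneg (hx0' z hz) _) hC0.le
    nlinarith [sq_nonneg (‖1-b*z‖)]
  obtain ⟨gT, hgTEq, hgTnorm⟩ := hmem h hhdiff 4 hhbd
  have hpζ : (t:ℂ)*ζ ∈ ball (0:ℂ) 1 := by
    rw [hbz, norm_mul, cabs_ofReal, hζ1, mul_one, abs_of_nonneg ht0.le]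
    exact ht1
  have hcζ : (starRingEnd ℂ) ζ * ζ = 1 := by
    rw [← Complex.normSq_eq_conj_mul_self, Complex.normSq_eq_norm_sq, hζ1]
    norm_num
  have hbp : 1 - b * ((t:ℂ)*ζ) = (((1-t^2) : ℝ) : ℂ) := by
    rw [hbdef]
    push_cast
    linear_combination (-(t:ℂ)^2) * hcζ
  have habspζ : ‖(t:ℂ)*ζ‖ = t := by
    rw [norm_mul, cabs_ofReal, hζ1, mul_one, abs_of_nonneg ht0.le]
  have e0 : (1-t^2:ℝ)^α * (1-t^2)^(2-α) = (1-t^2)^2 := by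
    rw [← Real.rpow_add hs0, show α+(2-α) = ((2:ℕ):ℝ) by push_cast; ring,
      Real.rpow_natCast]
  have hlowt : t ≤ ‖gT‖ := by
    have h1 := hlow gT ((t:ℂ)*ζ) hpζ
    rw [hdercongr _ _ hgTEq _ hpζ, habsdh _ hpζ, hbp, habspζ, cabs_ofReal,
      abs_of_nonneg hs0.le] at h1
    have e3 : (1-t^2)^α * ((1-t^2)^(2-α) * t/(1-t^2)^2) = t := by
      calc (1-t^2)^α * ((1-t^2)^(2-α) * t/(1-t^2)^2)
          = ((1-t^2)^α*(1-t^2)^(2-α)) * t / (1-t^2)^2 := by ring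
        _ = (1-t^2)^2 * t/(1-t^2)^2 := by rw [e0]
        _ = t := by field_simp
    rw [e3] at h1
    exact h1
  have hMugT : Set.EqOn (ι (Mu gT)) (fun z => u z * h z) (ball (0:ℂ) 1) := fun z hz => by
    rw [hMu gT z hz, hgTEq hz]
  have hnormMu : ‖Mu gT‖ = blochNorm α (fun z => u z * h z) := by
    rw [hnorm, blochNorm_congr hMugT]
  have hptw : ∀ z ∈ ball (0:ℂ) 1, (1 - ‖z‖^2)^α *
      ‖deriv (fun z => u z * h z) z‖ ≤ 1/(8*c) + 1/(8*c) := by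
    intro z hz
    have hud : HasDerivAt u (deriv u z) z :=
      (hu.differentiableAt (isOpen_ball.mem_nhds hz)).hasDerivAt
    have hpr := hud.mul (hhd z hz)
    rw [show deriv (fun z => u z * h z) z = _ from hpr.deriv]
    have htri : ‖deriv u z * h z +
          u z * ((((1-t^2)^(2-α):ℝ):ℂ) * (b/(1-b*z)^2))‖
        ≤ ‖deriv u z‖ * ‖h z‖ +
          ‖u z‖ * ((1-t^2)^(2-α) * t / ‖1-b*z‖^2) := by
      have habsval : ‖(((1-t^2)^(2-α):ℝ):ℂ) * (b/(1-b*z)^2)‖ =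
          (1-t^2)^(2-α) * t / ‖1-b*z‖^2 := by
        rw [norm_mul, norm_div, norm_pow, cabs_ofReal, abs_of_nonneg hC0.le, habsb]
        ring
      refine le_trans (norm_add_le _ _) (add_le_add ?_ ?_)
      · exact le_of_eq (norm_mul _ _)
      · rw [norm_mul, habsval]
    calc (1 - ‖z‖^2)^α * ‖deriv u z * h z +
          u z * ((((1-t^2)^(2-α):ℝ):ℂ) * (b/(1-b*z)^2))‖
        ≤ (1 - ‖z‖^2)^α * (‖deriv u z‖ * ‖h z‖ +
            ‖u z‖ * ((1-t^2)^(2-α) * t / ‖1-b*z‖^2)) :=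
          mul_le_mul_of_nonneg_left htri (Real.rpow_nonneg (hx0' z hz) _)
      _ = (1 - ‖z‖^2)^α * ‖deriv u z‖ *
            ((1-t^2)^(2-α) / ‖1-b*z‖) +
          (1 - ‖z‖^2)^α * ‖u z‖ *
            ((1-t^2)^(2-α) * t / ‖1-b*z‖^2) := by
          rw [habsh z hz]; ring
      _ ≤ 1/(8*c) + 1/(8*c) :=
          add_le_add (hA t htθA ht2 ht1 z hz) (hB t htθB ht2 ht1 z hz)
  have hupperMu : blochNorm α (fun z => u z * h z) ≤ W * (1-t^2) + (1/(8*c) + 1/(8*c)) := by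
    refine le_trans (hupper _ _ hptw) ?_
    apply add_le_add_left
    show ‖u 0 * h 0‖ ≤ W*(1-t^2)
    have h00 : h 0 = (((1-t^2)^(2-α):ℝ):ℂ) := by
      simp only [hhdef, mul_zero, sub_zero, inv_one, mul_one]
    rw [norm_mul, h00, cabs_ofReal, abs_of_nonneg hC0.le]
    have hu0 := hWu 0 (mem_ball_self one_pos)
    nlinarith [norm_nonneg (u 0)]
  have hWt : W * (1-t^2) ≤ 1/(16*c) := by
    have h1 : 1 - t ≤ 1/(32*c*W) := by linarith
    have h2 : W * (1-t^2) ≤ W * (2*(1/(32*c*W))) := by nlinarith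
    have h3 : W * (2*(1/(32*c*W))) = 1/(16*c) := by
      field_simp
      ring
    linarith
  have hfinal := hcb gT
  rw [hnormMu] at hfinal
  have hcontra : t ≤ 5/16 := by
    calc t ≤ ‖gT‖ := hlowt
      _ ≤ c * blochNorm α (fun z => u z * h z) := hfinal
      _ ≤ c * (1/(16*c) + (1/(8*c)+1/(8*c))) := by
          apply mul_le_mul_of_nonneg_left (by linarith) hc0.le
      _ = 5/16 := by field_simp; ring
  linarith
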